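/- Let n, m, d be natural numbers with 0 < d < min(m,n). Then the determinant of the (m-d)×(m-d) matrix with (i,j) entry C(n, d-i+j) for 1 ≤ i,j ≤ m-d equals ∏_{i=1}^{d} ((i-1)!·(m+n-2d-1+i)!) / ((m-i)!·(n-i)!). -/

import Mathlib

open Finset

/-- Binomial coefficient `C(c, k)` with integer lower index, zero when `k < 0`
(and automatically zero when `k > c`), as a rational number. -/
def binomQ (c : ℕ) (k : ℤ) : ℚ := if 0 ≤ k then (c.choose k.toNat : ℚ) else 0

lemma fact_shift (a L : ℕ) :
    (a + L).factorial = a.factorial * ∏ s ∈ Finset.range L, (a + 1 + s) := by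
  induction L with
  | zero => simp
  | succ L ih =>
      rw [show a + (L + 1) = (a + L) + 1 from rfl, Nat.factorial_succ, ih,
        Finset.prod_range_succ]
      ring

lemma fact_shift_q (a L : ℕ) :
    ((a + L).factorial : ℚ) = (a.factorial : ℚ) * ∏ s ∈ Finset.range L, ((a : ℚ) + 1 + s) := by
  rw [fact_shift]; push_cast; ring

lemma prod_ratio (a L : ℕ) :
    ∏ s ∈ Finset.range L, ((a : ℚ) + 1 + s) = ((a + L).factorial : ℚ) / (a.factorial : ℚ) := by
  rw [fact_shift_q, mul_div_cancel_left₀ _ (Nat.cast_ne_zero.mpr (Nat.factorial_ne_zero a))]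

lemma ratio_double (e c L : ℕ) :
    ((c.factorial : ℚ) * ((e + c + L).factorial : ℚ)) /
      (((c + L).factorial : ℚ) * ((e + c).factorial : ℚ))
    = ∏ j ∈ Finset.range L, (((e : ℚ) + c + j + 1) / ((c : ℚ) + j + 1)) := by
  have fne : ∀ k : ℕ, ((k.factorial : ℚ)) ≠ 0 :=
    fun k => Nat.cast_ne_zero.mpr (Nat.factorial_ne_zero k)
  have h1 : ∏ j ∈ Finset.range L, (((e : ℚ) + c + j + 1)) =
      ∏ j ∈ Finset.range L, (((e + c : ℕ) : ℚ) + 1 + j) :=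
    Finset.prod_congr rfl fun j _ => by push_cast; ring
  have h2 : ∏ j ∈ Finset.range L, (((c : ℚ) + j + 1)) =
      ∏ j ∈ Finset.range L, ((c : ℚ) + 1 + j) :=
    Finset.prod_congr rfl fun j _ => by ring
  rw [Finset.prod_div_distrib, h1, h2, prod_ratio, prod_ratio,
    show e + c + L = (e + c) + L from rfl]
  have hcl := fne (c + L)
  have hec := fne (e + c)
  have hc := fne c
  have hecl := fne ((e + c) + L)
  field_simp

lemma det_eval_vandermonde {N : ℕ} (p : Fin N → Polynomial ℚ)
    (h : ∀ j, (p j).natDegree < N) (x : Fin N → ℚ) :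
    (Matrix.of fun i j : Fin N => (p j).eval (x i)).det
      = (Matrix.vandermonde x).det * (Matrix.of fun k j : Fin N => (p j).coeff k).det := by
  rw [← Matrix.det_mul]
  congr 1
  ext i j
  simp only [Matrix.of_apply, Matrix.mul_apply]
  rw [Polynomial.eval_eq_sum_range' (h j),
    ← Fin.sum_univ_eq_sum_range (fun k => (p j).coeff k * x i ^ k)]
  exact Finset.sum_congr rfl fun k _ => by
    simp [Matrix.vandermonde_apply, mul_comm]

lemma entry_eq (n d N I J : ℕ) (hd : 0 < d) (hdn : d < n) (hI : I < N) (hJ : J < N) :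
    (((d + N - 1 - I).factorial : ℚ) * ((n - d + I).factorial : ℚ) / (n.factorial : ℚ)) *
      binomQ n ((d : ℤ) - (I + 1) + (J + 1))
    = (∏ s ∈ Finset.range (N - 1 - J), ((d : ℚ) + J + 2 + (s : ℚ) - ((I : ℚ) + 1))) *
      (∏ s ∈ Finset.range J, (((I : ℚ) + 1) + ((n : ℚ) - d - s - 1))) := by
  have fne : ∀ k : ℕ, ((k.factorial : ℚ)) ≠ 0 :=
    fun k => Nat.cast_ne_zero.mpr (Nat.factorial_ne_zero k)
  rcases lt_or_ge (d + J) I with hc | hc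
  · rw [binomQ, if_neg (by omega), mul_zero]
    symm
    apply mul_eq_zero_of_left
    obtain ⟨t, ht⟩ : ∃ t, I = d + J + 1 + t := ⟨I - d - J - 1, by omega⟩
    apply Finset.prod_eq_zero (i := t) (Finset.mem_range.mpr (by omega))
    subst ht; push_cast; ring
  rcases lt_or_ge (n + I) (d + J) with hc2 | hc2
  · rw [binomQ, if_pos (by omega)]
    rw [show ((d : ℤ) - (I + 1) + (J + 1)).toNat = d + J - I by omega]
    rw [Nat.choose_eq_zero_of_lt (by omega), Nat.cast_zero, mul_zero]
    symm
    apply mul_eq_zero_of_right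
    obtain ⟨b, hb⟩ : ∃ b, n = d + b := ⟨n - d, by omega⟩
    apply Finset.prod_eq_zero (i := b + I) (Finset.mem_range.mpr (by omega))
    subst hb; push_cast; ring
  · obtain ⟨a, haI⟩ : ∃ a, d + J = I + a := ⟨d + J - I, by omega⟩
    obtain ⟨b, hb⟩ : ∃ b, n = a + b := ⟨n - a, by omega⟩
    obtain ⟨L1, hL1⟩ : ∃ L1, N = J + 1 + L1 := ⟨N - 1 - J, by omega⟩
    rw [binomQ, if_pos (by omega)]
    rw [show ((d : ℤ) - (I + 1) + (J + 1)).toNat = a by omega]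
    rw [Nat.cast_choose ℚ (show a ≤ n by omega)]
    have hfst : (∏ s ∈ Finset.range (N - 1 - J), ((d : ℚ) + J + 2 + (s : ℚ) - ((I : ℚ) + 1)))
        = (((a + L1).factorial : ℚ)) / (a.factorial : ℚ) := by
      rw [show N - 1 - J = L1 by omega, ← prod_ratio]
      refine Finset.prod_congr rfl fun s _ => ?_
      have : (d : ℚ) + J = I + a := by exact_mod_cast congrArg (Nat.cast : ℕ → ℚ) haI
      linarith
    have hsnd : (∏ s ∈ Finset.range J, (((I : ℚ) + 1) + ((n : ℚ) - d - s - 1)))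
        = (((b + J).factorial : ℚ)) / (b.factorial : ℚ) := by
      rw [← prod_ratio, ← Finset.prod_range_reflect (fun s => (b : ℚ) + 1 + s) J]
      refine Finset.prod_congr rfl fun s hs => ?_
      have hs' : s < J := Finset.mem_range.mp hs
      have h1 : (d : ℚ) + J = I + a := by exact_mod_cast congrArg (Nat.cast : ℕ → ℚ) haI
      have h2 : (n : ℚ) = a + b := by exact_mod_cast congrArg (Nat.cast : ℕ → ℚ) hb
      have h3 : ((J - 1 - s : ℕ) : ℚ) = (J : ℚ) - 1 - s := by
        have h4 : J - 1 - s + (s + 1) = J := by omega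
        have h5 := congrArg (Nat.cast : ℕ → ℚ) h4
        push_cast at h5
        linarith
      rw [h3]
      linarith
    rw [hfst, hsnd]
    rw [show d + N - 1 - I = a + L1 by omega, show n - d + I = b + J by omega,
      show n - a = b by omega]
    field_simp

lemma prod_identity (n d N : ℕ) (hd : 0 < d) (hdn : d < n) (hN0 : 0 < N) :
    ∏ i ∈ Finset.range N,
      ((i.factorial : ℚ) * ((n + N - 1 - i).factorial : ℚ)) /
        (((d + N - 1 - i).factorial : ℚ) * ((n - d + i).factorial : ℚ))
    = ∏ i ∈ Finset.range d,
      ((i.factorial : ℚ) * ((N + n - d + i).factorial : ℚ)) /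
        (((N + d - 1 - i).factorial : ℚ) * ((n - 1 - i).factorial : ℚ)) := by
  obtain ⟨e, he⟩ : ∃ e, n = d + e := ⟨n - d, by omega⟩
  subst he
  calc
    ∏ i ∈ Finset.range N,
        ((i.factorial : ℚ) * ((d + e + N - 1 - i).factorial : ℚ)) /
          (((d + N - 1 - i).factorial : ℚ) * ((d + e - d + i).factorial : ℚ))
      = (∏ i ∈ Finset.range N, (i.factorial : ℚ)) *
          (∏ i ∈ Finset.range N, (((d + e + N - 1 - i).factorial : ℚ))) /
          ((∏ i ∈ Finset.range N, (((d + N - 1 - i).factorial : ℚ))) *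
           (∏ i ∈ Finset.range N, (((e + i).factorial : ℚ)))) := by
        rw [← Finset.prod_mul_distrib, ← Finset.prod_mul_distrib, ← Finset.prod_div_distrib]
        refine Finset.prod_congr rfl fun i _ => ?_
        rw [show d + e - d + i = e + i by omega]
    _ = (∏ i ∈ Finset.range N, (i.factorial : ℚ)) *
          (∏ i ∈ Finset.range N, (((d + e + i).factorial : ℚ))) /
          ((∏ i ∈ Finset.range N, (((d + i).factorial : ℚ))) *
           (∏ i ∈ Finset.range N, (((e + i).factorial : ℚ)))) := by
        rw [← Finset.prod_range_reflect (fun i => ((d + e + i).factorial : ℚ)) N,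
          ← Finset.prod_range_reflect (fun i => ((d + i).factorial : ℚ)) N]
        congr 1
        · congr 1
          refine Finset.prod_congr rfl fun i hi => ?_
          have := Finset.mem_range.mp hi
          congr 2
          omega
        · congr 1
          refine Finset.prod_congr rfl fun i hi => ?_
          have := Finset.mem_range.mp hi
          congr 2
          omega
    _ = ∏ i ∈ Finset.range N,
          ((i.factorial : ℚ) * ((e + i + d).factorial : ℚ)) /
            (((i + d).factorial : ℚ) * ((e + i).factorial : ℚ)) := by
        rw [← Finset.prod_mul_distrib, ← Finset.prod_mul_distrib, ← Finset.prod_div_distrib]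
        refine Finset.prod_congr rfl fun i _ => ?_
        rw [show e + i + d = d + e + i by omega, show i + d = d + i by omega]
    _ = ∏ i ∈ Finset.range N, ∏ j ∈ Finset.range d,
          (((e : ℚ) + i + j + 1) / ((i : ℚ) + j + 1)) := by
        exact Finset.prod_congr rfl fun i _ => ratio_double e i d
    _ = ∏ j ∈ Finset.range d, ∏ i ∈ Finset.range N,
          (((e : ℚ) + j + i + 1) / ((j : ℚ) + i + 1)) := by
        rw [Finset.prod_comm]
        exact Finset.prod_congr rfl fun j _ => Finset.prod_congr rfl fun i _ => by ring_nf
    _ = ∏ j ∈ Finset.range d,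
          ((j.factorial : ℚ) * ((e + j + N).factorial : ℚ)) /
            (((j + N).factorial : ℚ) * ((e + j).factorial : ℚ)) := by
        exact Finset.prod_congr rfl fun j _ => (ratio_double e j N).symm
    _ = (∏ j ∈ Finset.range d, (j.factorial : ℚ)) *
          (∏ j ∈ Finset.range d, (((e + j + N).factorial : ℚ))) /
          ((∏ j ∈ Finset.range d, (((j + N).factorial : ℚ))) *
           (∏ j ∈ Finset.range d, (((e + j).factorial : ℚ)))) := by
        rw [← Finset.prod_mul_distrib, ← Finset.prod_mul_distrib, ← Finset.prod_div_distrib]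
    _ = (∏ j ∈ Finset.range d, (j.factorial : ℚ)) *
          (∏ j ∈ Finset.range d, (((N + (d + e) - d + j).factorial : ℚ))) /
          ((∏ j ∈ Finset.range d, (((N + d - 1 - j).factorial : ℚ))) *
           (∏ j ∈ Finset.range d, (((d + e - 1 - j).factorial : ℚ)))) := by
        rw [← Finset.prod_range_reflect (fun j => ((j + N).factorial : ℚ)) d,
          ← Finset.prod_range_reflect (fun j => ((e + j).factorial : ℚ)) d]
        congr 1
        · congr 1
          refine Finset.prod_congr rfl fun j _ => ?_
          congr 2
          omega
        · congr 1
          · refine Finset.prod_congr rfl fun j hj => ?_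
            have := Finset.mem_range.mp hj
            congr 2
            omega
          · refine Finset.prod_congr rfl fun j hj => ?_
            have := Finset.mem_range.mp hj
            congr 2
            omega
    _ = ∏ i ∈ Finset.range d,
          ((i.factorial : ℚ) * ((N + (d + e) - d + i).factorial : ℚ)) /
            (((N + d - 1 - i).factorial : ℚ) * (((d + e) - 1 - i).factorial : ℚ)) := by
        rw [← Finset.prod_mul_distrib, ← Finset.prod_mul_distrib, ← Finset.prod_div_distrib]

/-- Evaluation of the binomial Hankel determinant `det (C(n, d-i+j))_{1≤i,j≤m-d}`. -/
theorem hankel_binomial_det (n m d : ℕ) (hd : 0 < d) (hdm : d < m) (hdn : d < n) :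
    (Matrix.of fun i j : Fin (m - d) =>
        binomQ n ((d : ℤ) - ((i : ℕ) + 1) + ((j : ℕ) + 1))).det =
      ∏ i ∈ Finset.range d,
        ((i.factorial : ℚ) * ((m + n - 2 * d - 1 + i + 1).factorial : ℚ)) /
          (((m - i - 1).factorial : ℚ) * ((n - i - 1).factorial : ℚ)) := by
  have fne : ∀ k : ℕ, ((k.factorial : ℚ)) ≠ 0 :=
    fun k => Nat.cast_ne_zero.mpr (Nat.factorial_ne_zero k)
  set N := m - d with hN
  have hm : m = d + N := by omega
  have hN0 : 0 < N := by omega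
  set p : Fin N → Polynomial ℚ := fun j =>
    (∏ s ∈ Finset.range (N - 1 - (j : ℕ)),
      (Polynomial.C ((d : ℚ) + (j : ℕ) + 2 + s) - Polynomial.X)) *
    (∏ s ∈ Finset.range (j : ℕ), (Polynomial.X + Polynomial.C ((n : ℚ) - d - s - 1))) with hp
  have hdeg : ∀ j : Fin N, (p j).natDegree < N := by
    intro j
    have h1 : ∀ (L : ℕ) (c : ℕ → ℚ),
        (∏ s ∈ Finset.range L, (Polynomial.C (c s) - Polynomial.X)).natDegree ≤ L := by
      intro L c
      refine le_trans (Polynomial.natDegree_prod_le _ _) ?_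
      refine le_trans (Finset.sum_le_card_nsmul _ _ 1 ?_) (by simp)
      intro s _
      exact le_trans (Polynomial.natDegree_sub_le _ _) (by simp)
    have h2 : ∀ (L : ℕ) (c : ℕ → ℚ),
        (∏ s ∈ Finset.range L, (Polynomial.X + Polynomial.C (c s))).natDegree ≤ L := by
      intro L c
      refine le_trans (Polynomial.natDegree_prod_le _ _) ?_
      refine le_trans (Finset.sum_le_card_nsmul _ _ 1 ?_) (by simp)
      intro s _
      exact le_trans (Polynomial.natDegree_add_le _ _) (by simp)
    have := j.isLt
    calc (p j).natDegree ≤ _ + _ := Polynomial.natDegree_mul_le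
      _ ≤ (N - 1 - (j : ℕ)) + (j : ℕ) := add_le_add (h1 _ _) (h2 _ _)
      _ < N := by omega
  have hevalp : ∀ (j : Fin N) (x : ℚ), (p j).eval x =
      (∏ s ∈ Finset.range (N - 1 - (j : ℕ)), ((d : ℚ) + (j : ℕ) + 2 + (s : ℚ) - x)) *
      (∏ s ∈ Finset.range (j : ℕ), (x + ((n : ℚ) - d - s - 1))) := by
    intro j x
    simp [hp, Polynomial.eval_prod]
  set r : Fin N → ℚ := fun i =>
    ((d + N - 1 - (i : ℕ)).factorial : ℚ) * ((n - d + (i : ℕ)).factorial : ℚ) / (n.factorial : ℚ)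
    with hr
  -- scaled matrix equals polynomial evaluation matrix
  have hentry : ∀ i j : Fin N,
      r i * binomQ n ((d : ℤ) - ((i : ℕ) + 1) + ((j : ℕ) + 1)) = (p j).eval (((i : ℕ) : ℚ) + 1) := by
    intro i j
    rw [hevalp j, hr]
    exact entry_eq n d N i j hd hdn i.isLt j.isLt
  -- vandermonde transfer
  have hvdm : (Matrix.vandermonde (fun i : Fin N => ((i : ℕ) : ℚ) + 1)).det
      = (Matrix.vandermonde (fun i : Fin N => ((i : ℕ) : ℚ) + 1 + d - n)).det := by
    rw [Matrix.det_vandermonde, Matrix.det_vandermonde]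
    exact Finset.prod_congr rfl fun i _ => Finset.prod_congr rfl fun j _ => by ring
  have hQdet : (Matrix.of fun i j : Fin N => (p j).eval (((i : ℕ) : ℚ) + 1)).det
      = (Matrix.of fun i j : Fin N => (p j).eval (((i : ℕ) : ℚ) + 1 + d - n)).det := by
    rw [det_eval_vandermonde p hdeg, det_eval_vandermonde p hdeg, hvdm]
  -- triangular evaluation
  have htri : (Matrix.of fun i j : Fin N => (p j).eval (((i : ℕ) : ℚ) + 1 + d - n)).det
      = ∏ i : Fin N,
          (((n + (N - 1 - (i : ℕ))).factorial : ℚ) / (n.factorial : ℚ) * ((i : ℕ).factorial : ℚ)) := by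
    rw [Matrix.det_of_lowerTriangular _ ?_]
    · refine Finset.prod_congr rfl fun i _ => ?_
      simp only [Matrix.of_apply]
      rw [hevalp]
      have e1 : ∏ s ∈ Finset.range (N - 1 - (i : ℕ)),
          ((d : ℚ) + (i : ℕ) + 2 + (s : ℚ) - (((i : ℕ) : ℚ) + 1 + d - n))
          = ((n + (N - 1 - (i : ℕ))).factorial : ℚ) / (n.factorial : ℚ) := by
        rw [← prod_ratio]
        exact Finset.prod_congr rfl fun s _ => by ring
      have e2 : ∏ s ∈ Finset.range (i : ℕ),
          ((((i : ℕ) : ℚ) + 1 + d - n) + ((n : ℚ) - d - s - 1)) = ((i : ℕ).factorial : ℚ) := by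
        have : ((i : ℕ).factorial : ℚ) = (((0 + (i : ℕ)).factorial : ℚ)) / (((0 : ℕ).factorial : ℚ)) := by
          simp
        rw [this, ← prod_ratio, ← Finset.prod_range_reflect (fun s => ((0 : ℕ) : ℚ) + 1 + s) (i : ℕ)]
        refine Finset.prod_congr rfl fun s hs => ?_
        have hs' := Finset.mem_range.mp hs
        have h3 : (((i : ℕ) - 1 - s : ℕ) : ℚ) = ((i : ℕ) : ℚ) - 1 - s := by
          have h4 : (i : ℕ) - 1 - s + (s + 1) = (i : ℕ) := by omega
          have h5 := congrArg (Nat.cast : ℕ → ℚ) h4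
          push_cast at h5
          linarith
        rw [h3]
        ring
      rw [e1, e2]
    · intro i j hij
      have hij' : i < j := hij
      simp only [Matrix.of_apply]
      rw [hevalp]
      apply mul_eq_zero_of_right
      apply Finset.prod_eq_zero (i := (i : ℕ)) (Finset.mem_range.mpr hij')
      ring
  -- assemble
  have hrne : (∏ i : Fin N, r i) ≠ 0 := by
    refine Finset.prod_ne_zero_iff.mpr fun i _ => ?_
    exact div_ne_zero (mul_ne_zero (fne _) (fne _)) (fne _)
  have key : (∏ i : Fin N, r i) *
      (Matrix.of fun i j : Fin N => binomQ n ((d : ℤ) - ((i : ℕ) + 1) + ((j : ℕ) + 1))).det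
      = ∏ i : Fin N,
          (((n + (N - 1 - (i : ℕ))).factorial : ℚ) / (n.factorial : ℚ) * ((i : ℕ).factorial : ℚ)) := by
    rw [← Matrix.det_mul_column r
      (Matrix.of fun i j : Fin N => binomQ n ((d : ℤ) - ((i : ℕ) + 1) + ((j : ℕ) + 1)))]
    rw [show (Matrix.of fun i j : Fin N =>
        r i * (Matrix.of fun i j : Fin N =>
          binomQ n ((d : ℤ) - ((i : ℕ) + 1) + ((j : ℕ) + 1))) i j)
        = Matrix.of fun i j : Fin N => (p j).eval (((i : ℕ) : ℚ) + 1) by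
      ext i j
      exact hentry i j]
    rw [hQdet, htri]
  have hdet : (Matrix.of fun i j : Fin N =>
      binomQ n ((d : ℤ) - ((i : ℕ) + 1) + ((j : ℕ) + 1))).det
      = ∏ i : Fin N,
          ((((i : ℕ).factorial : ℚ) * ((n + N - 1 - (i : ℕ)).factorial : ℚ)) /
            (((d + N - 1 - (i : ℕ)).factorial : ℚ) * ((n - d + (i : ℕ)).factorial : ℚ))) := by
    apply mul_left_cancel₀ hrne
    rw [key]
    have h7 : ∀ i : Fin N,
        r i * ((((i : ℕ).factorial : ℚ) * ((n + N - 1 - (i : ℕ)).factorial : ℚ)) /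
            (((d + N - 1 - (i : ℕ)).factorial : ℚ) * ((n - d + (i : ℕ)).factorial : ℚ)))
        = (((n + (N - 1 - (i : ℕ))).factorial : ℚ) / (n.factorial : ℚ) * ((i : ℕ).factorial : ℚ)) := by
      intro i
      rw [hr]
      rw [show n + (N - 1 - (i : ℕ)) = n + N - 1 - (i : ℕ) by have := i.isLt; omega]
      have f1 := fne (d + N - 1 - (i : ℕ))
      have f2 := fne (n - d + (i : ℕ))
      have f3 := fne n
      field_simp
    rw [← Finset.prod_mul_distrib]
    exact Finset.prod_congr rfl fun i _ => (h7 i).symm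
  rw [hdet, Fin.prod_univ_eq_prod_range (fun k =>
    (((k : ℕ).factorial : ℚ) * ((n + N - 1 - k).factorial : ℚ)) /
      (((d + N - 1 - k).factorial : ℚ) * ((n - d + k).factorial : ℚ))) N]
  rw [prod_identity n d N hd hdn hN0]
  refine Finset.prod_congr rfl fun i hi => ?_
  have hi' := Finset.mem_range.mp hi
  rw [show m + n - 2 * d - 1 + i + 1 = N + n - d + i by omega,
    show m - i - 1 = N + d - 1 - i by omega, show n - i - 1 = n - 1 - i by omega]
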